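/- Let 2 < θ < 3. The dispersion relation ω(k) := √(α̂(k)) is differentiable at every k ∈ (0, 1/2), with ω'(k) = α̂'(k)/(2√(α̂(k))) where α̂'(k) = 4π·Σ_{x=1}^∞ sin(2πkx)/x^{θ−1}, and lim_{k→0+} k^{(3−θ)/2}·ω'(k) = (θ−1)·√(C(θ))/2, where C(θ) := 4π^{θ−1}·∫₀^∞ sin²(y)/y^θ dy. In particular the derivative of the dispersion relation diverges like |k|^{−(3−θ)/2} as k → 0. -/

import Mathlib

noncomputable section
open Real

/-- `α̂(k) = 4 Σ_{x≥1} sin²(πkx)/x^θ`, the Fourier transform of the long-range coupling. -/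
def ahat (θ k : ℝ) : ℝ := 4 * ∑' x : ℕ, sin (π * k * ((x : ℝ) + 1)) ^ 2 / ((x : ℝ) + 1) ^ θ

/-- The dispersion relation `ω(k) = √(α̂(k))`. -/
def disp (θ k : ℝ) : ℝ := Real.sqrt (ahat θ k)

/-- `α̂'(k) = 4π Σ_{x≥1} sin(2πkx)/x^{θ-1}`. -/
def ahatD (θ k : ℝ) : ℝ := 4 * π * ∑' x : ℕ, sin (2 * π * k * ((x : ℝ) + 1)) / ((x : ℝ) + 1) ^ (θ - 1)

/-- `C(θ) = 4 π^{θ-1} ∫₀^∞ sin²(y)/y^θ dy` for `2 < θ < 3`. -/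
def Cθ (θ : ℝ) : ℝ := 4 * π ^ (θ - 1) * ∫ y in Set.Ioi (0 : ℝ), sin y ^ 2 / y ^ θ

namespace Stmt9Aux

open MeasureTheory Filter Set

/-- `J θ = ∫₀^∞ sin²(πy)/y^θ dy`. -/
def J (θ : ℝ) : ℝ := ∫ y in Set.Ioi (0 : ℝ), sin (π * y) ^ 2 / y ^ θ

lemma summable_aux {p : ℝ} (hp : p < -1) : Summable (fun n : ℕ => ((n : ℝ) + 1) ^ p) := by
  have := Real.summable_nat_rpow (p := p) |>.mpr hp
  have h2 := (summable_nat_add_iff (f := fun n : ℕ => (n : ℝ) ^ p) 1).mpr this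
  refine h2.congr fun n => ?_
  push_cast
  ring_nf

lemma summable_ahat_term {θ : ℝ} (hθ : 2 < θ) (k : ℝ) :
    Summable (fun x : ℕ => sin (π * k * ((x : ℝ) + 1)) ^ 2 / ((x : ℝ) + 1) ^ θ) := by
  refine Summable.of_nonneg_of_le (fun n => ?_) (fun n => ?_) (summable_aux (p := -θ) (by linarith))
  · positivity
  · rw [Real.rpow_neg (by positivity), ← one_div]
    apply div_le_div_of_nonneg_right ?_ ?_ |>.trans_eq rfl
    · calc sin (π * k * ((n:ℝ)+1)) ^ 2 ≤ 1 ^ 2 := sq_le_sq' (by linarith [neg_one_le_sin (π * k * ((n:ℝ)+1))]) (sin_le_one _)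
        _ = 1 := one_pow 2
    · positivity

lemma hasDerivAt_ahat {θ : ℝ} (hθ : 2 < θ) (k : ℝ) :
    HasDerivAt (ahat θ) (ahatD θ k) k := by
  unfold ahat ahatD
  have summable_aux : ∀ {p : ℝ}, p < -1 → Summable (fun n : ℕ => ((n : ℝ) + 1) ^ p) :=
    fun hp => summable_aux hp
  have hcpos : ∀ n : ℕ, (0:ℝ) < (n:ℝ) + 1 := fun n => by positivity
  set f : ℕ → ℝ → ℝ := fun n y => sin (π * y * ((n:ℝ)+1)) ^ 2 / ((n:ℝ)+1) ^ θ with hf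
  set f' : ℕ → ℝ → ℝ := fun n y => π * (sin (2 * π * y * ((n:ℝ)+1)) / ((n:ℝ)+1) ^ (θ-1)) with hf'
  have hd : ∀ n y, HasDerivAt (f n) (f' n y) y := by
    intro n y
    set c := ((n:ℝ)+1)
    have hcθ : (0:ℝ) < c ^ θ := Real.rpow_pos_of_pos (hcpos n) θ
    have h1 : HasDerivAt (fun y : ℝ => π * y * c) (π * c) y := by
      simpa using ((hasDerivAt_id y).const_mul π).mul_const c
    have h2 : HasDerivAt (fun y : ℝ => sin (π * y * c) ^ 2)
        ((2 : ℕ) * sin (π * y * c) ^ 1 * (cos (π * y * c) * (π * c))) y :=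
      (h1.sin.pow 2)
    have h3 := h2.div_const (c ^ θ)
    refine h3.congr_deriv ?_
    simp only [hf']
    have harg : 2 * π * y * c = 2 * (π * y * c) := by ring
    rw [harg, sin_two_mul, Real.rpow_sub (hcpos n), Real.rpow_one]
    field_simp
    ring
  have hub : ∀ n y, ‖f' n y‖ ≤ π * ((n:ℝ)+1) ^ (1-θ) := by
    intro n y
    rw [hf', Real.norm_eq_abs, abs_mul, abs_of_pos pi_pos, abs_div,
      abs_of_pos (Real.rpow_pos_of_pos (hcpos n) _)]
    have h1 : |sin (2 * π * y * ((n:ℝ)+1))| ≤ 1 := abs_sin_le_one _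
    have h2 : ((n:ℝ)+1) ^ (1-θ) = (((n:ℝ)+1) ^ (θ-1))⁻¹ := by
      rw [← Real.rpow_neg (hcpos n).le]; congr 1; ring
    rw [h2]
    have h3 : (0:ℝ) < ((n:ℝ)+1) ^ (θ-1) := Real.rpow_pos_of_pos (hcpos n) _
    apply mul_le_mul_of_nonneg_left _ pi_pos.le
    rw [div_le_iff₀ h3, inv_mul_cancel₀ h3.ne']
    exact h1
  have hu : Summable (fun n : ℕ => π * ((n:ℝ)+1) ^ (1-θ)) :=
    (summable_aux (by linarith)).mul_left π
  have h0 : Summable (fun n : ℕ => f n 0) := by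
    simpa [hf] using (summable_zero : Summable (fun _ : ℕ => (0:ℝ)))
  have H := hasDerivAt_tsum hu hd hub h0 k
  have := H.const_mul (4:ℝ)
  refine this.congr_deriv ?_
  rw [tsum_mul_left]
  ring


lemma ahat_pos {θ : ℝ} (hθ : 2 < θ) {k : ℝ} (hk : k ∈ Set.Ioo (0:ℝ) (1/2)) :
    0 < ahat θ k := by
  have hsum := summable_ahat_term hθ k
  have h0 : 0 < sin (π * k * ((0:ℕ) + 1)) ^ 2 / (((0:ℕ):ℝ) + 1) ^ θ := by
    norm_num
    have : 0 < sin (π * k) := by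
      apply sin_pos_of_pos_of_lt_pi (mul_pos pi_pos hk.1)
      calc π * k < π * (1/2) := by
            exact mul_lt_mul_of_pos_left hk.2 pi_pos
        _ < π := by linarith [pi_pos]
    positivity
  have := Summable.tsum_pos hsum (fun n => by positivity) 0 h0
  unfold ahat; linarith

/-- The generic quantitative Riemann-sum convergence lemma. -/
lemma riemann {θ : ℝ} (hθ1 : 2 < θ) (hθ2 : θ < 3) {g g' : ℝ → ℝ} {M : ℝ} (hM : 0 ≤ M)
    (hderiv : ∀ y : ℝ, 0 < y → HasDerivAt g (g' y) y)
    (hg' : ∀ y : ℝ, 0 < y → |g' y| ≤ M * y ^ (1 - θ))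
    (hg0 : ∀ y : ℝ, 0 < y → |g y| ≤ M * y ^ (2 - θ))
    (hint : IntegrableOn g (Set.Ioi 0))
    (hsum : ∀ k : ℝ, 0 < k → Summable (fun x : ℕ => g (k * ((x:ℝ) + 1)))) :
    Tendsto (fun k => k * ∑' x : ℕ, g (k * ((x:ℝ) + 1))) (nhdsWithin 0 (Set.Ioi 0))
      (nhds (∫ y in Set.Ioi (0:ℝ), g y)) := by
  have summable_aux : ∀ {p : ℝ}, p < -1 → Summable (fun n : ℕ => ((n : ℝ) + 1) ^ p) :=
    fun hp => Stmt9Aux.summable_aux hp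
  have h3θ : (0:ℝ) < 3 - θ := by linarith
  have hZsum : Summable (fun n : ℕ => ((n:ℝ)+1) ^ (1-θ)) := summable_aux (by linarith)
  set Z := ∑' n : ℕ, ((n:ℝ)+1) ^ (1-θ) with hZdef
  set A := M * Z + M / (3-θ) with hAdef
  -- main quantitative bound
  have key : ∀ k : ℝ, 0 < k →
      |k * (∑' x : ℕ, g (k * ((x:ℝ) + 1))) - ∫ y in Ioi (0:ℝ), g y| ≤ A * k ^ (3-θ) := by
    intro k hk
    set S : ℕ → Set ℝ := fun n => Ioc (k*n) (k*n+k) with hS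
    have hmeas : ∀ n, MeasurableSet (S n) := fun n => measurableSet_Ioc
    have hdisj : Pairwise (Function.onFun Disjoint S) := by
      have key : ∀ m n : ℕ, m < n → Disjoint (S m) (S n) := by
        intro m n h
        rw [hS]
        apply Set.Ioc_disjoint_Ioc.mpr
        have : (m:ℝ) + 1 ≤ n := by exact_mod_cast h
        calc min (k*m+k) (k*n+k) ≤ k*m+k := min_le_left _ _
          _ ≤ k*n := by nlinarith
          _ ≤ max (k*m) (k*n) := le_max_right _ _
      intro m n hmn
      rcases hmn.lt_or_gt with h | h
      · exact key m n h
      · exact (key n m h).symm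
    have hcover : ⋃ n, S n = Ioi (0:ℝ) := by
      ext y
      simp only [hS, mem_iUnion, mem_Ioc, mem_Ioi]
      constructor
      · rintro ⟨n, h1, h2⟩
        have : (0:ℝ) ≤ k * n := by positivity
        linarith
      · intro hy
        have hyk : 0 < y / k := div_pos hy hk
        have hceil_pos : 0 < ⌈y/k⌉₊ := Nat.ceil_pos.mpr hyk
        refine ⟨⌈y/k⌉₊ - 1, ?_, ?_⟩
        · have h1 : ((⌈y/k⌉₊:ℝ) - 1) < y / k := by
            have := Nat.ceil_lt_add_one hyk.le
            linarith
          have hcast : ((⌈y/k⌉₊ - 1 : ℕ):ℝ) = (⌈y/k⌉₊:ℝ) - 1 := by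
            push_cast [hceil_pos]
            ring
          rw [hcast]
          calc k * ((⌈y/k⌉₊:ℝ) - 1) < k * (y/k) := by
                exact mul_lt_mul_of_pos_left h1 hk
            _ = y := by field_simp
        · have h2 : y / k ≤ (⌈y/k⌉₊:ℝ) := Nat.le_ceil _
          have hcast : ((⌈y/k⌉₊ - 1 : ℕ):ℝ) = (⌈y/k⌉₊:ℝ) - 1 := by
            push_cast [hceil_pos]
            ring
          rw [hcast]
          have : y ≤ k * (⌈y/k⌉₊:ℝ) := by
            rw [← div_le_iff₀' hk]
            exact h2
          linarith
    have hintU : IntegrableOn g (⋃ n, S n) := by rw [hcover]; exact hint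
    have H : HasSum (fun n => ∫ y in S n, g y) (∫ y in Ioi (0:ℝ), g y) := by
      have := MeasureTheory.hasSum_integral_iUnion hmeas hdisj hintU
      rwa [hcover] at this
    -- per-term estimate
    have perterm : ∀ n : ℕ,
        |k * g (k * ((n:ℝ)+1)) - ∫ y in S (n+1), g y| ≤ M * k ^ (3-θ) * ((n:ℝ)+1) ^ (1-θ) := by
      intro n
      set c := k * ((n:ℝ)+1) with hc
      have hcpos : 0 < c := by positivity
      have hSn : S (n+1) = Ioc c (c+k) := by
        rw [hS, hc]
        push_cast
        ring_nf
      have hvol : volume (Ioc c (c+k)) = ENNReal.ofReal k := by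
        rw [Real.volume_Ioc]
        congr 1
        ring
      have hvolR : (volume (Ioc c (c+k))).toReal = k := by
        rw [hvol, ENNReal.toReal_ofReal hk.le]
      have hvollt : volume (Ioc c (c+k)) < ⊤ := by rw [hvol]; exact ENNReal.ofReal_lt_top
      have hgint : IntegrableOn g (Ioc c (c+k)) := by
        apply hint.mono_set
        intro y hy
        exact lt_trans hcpos hy.1
      have hconst : IntegrableOn (fun _ => g c) (Ioc c (c+k)) := by
        apply (integrableOn_const_iff (C := g c)).mpr
        exact Or.inr hvollt
      -- MVT bound
      have hmvt : ∀ y ∈ Ioc c (c+k), ‖g c - g y‖ ≤ M * c ^ (1-θ) * k := by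
        intro y hy
        have hmem : y ∈ Icc c (c+k) := ⟨hy.1.le, hy.2⟩
        have hbd : ∀ z ∈ Icc c (c+k), ‖g' z‖ ≤ M * c ^ (1-θ) := by
          intro z hz
          have hzpos : 0 < z := lt_of_lt_of_le hcpos hz.1
          refine (hg' z hzpos).trans ?_
          apply mul_le_mul_of_nonneg_left _ hM
          exact Real.rpow_le_rpow_of_nonpos hcpos hz.1 (by linarith)
        have hdd : ∀ z ∈ Icc c (c+k), HasDerivWithinAt g (g' z) (Icc c (c+k)) z :=
          fun z hz => (hderiv z (lt_of_lt_of_le hcpos hz.1)).hasDerivWithinAt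
        have := (convex_Icc c (c+k)).norm_image_sub_le_of_norm_hasDerivWithin_le
          hdd hbd (left_mem_Icc.mpr (by linarith)) hmem
        rw [norm_sub_rev]
        refine this.trans ?_
        apply mul_le_mul_of_nonneg_left _ (by positivity)
        rw [Real.norm_eq_abs, abs_of_nonneg (by linarith [hy.1.le] : (0:ℝ) ≤ y - c)]
        linarith [hy.2]
      have hdiffint : k * g c - ∫ y in S (n+1), g y = ∫ y in Ioc c (c+k), (g c - g y) := by
        rw [hSn, integral_sub hconst hgint, setIntegral_const, measureReal_def, hvolR, smul_eq_mul]
      rw [hdiffint]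
      have hb := norm_setIntegral_le_of_norm_le_const (μ := volume)
        (s := Ioc c (c+k)) (C := M * c ^ (1-θ) * k) hvollt hmvt
      rw [Real.norm_eq_abs] at hb
      refine hb.trans ?_
      rw [measureReal_def, hvolR]
      have hcrw : c ^ (1-θ) = k ^ (1-θ) * ((n:ℝ)+1) ^ (1-θ) := by
        rw [hc, Real.mul_rpow hk.le (by positivity)]
      rw [hcrw]
      have hkrw : k ^ (1-θ) * k * k = k ^ (3-θ) := by
        rw [show (3:ℝ)-θ = (1-θ)+1+1 by ring, Real.rpow_add hk, Real.rpow_add hk, Real.rpow_one]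
      rw [← hkrw]
      apply le_of_eq
      ring
    -- summability facts
    have sumg : Summable (fun x : ℕ => k * g (k * ((x:ℝ)+1))) := (hsum k hk).mul_left k
    have sumI : Summable (fun n : ℕ => ∫ y in S n, g y) := H.summable
    have sumI' : Summable (fun n : ℕ => ∫ y in S (n+1), g y) := by
      have := (summable_nat_add_iff 1).mpr sumI
      exact this
    have sumdiff : Summable (fun n : ℕ => k * g (k * ((n:ℝ)+1)) - ∫ y in S (n+1), g y) :=
      sumg.sub sumI'
    have sumbound : Summable (fun n : ℕ => M * k ^ (3-θ) * ((n:ℝ)+1) ^ (1-θ)) :=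
      hZsum.mul_left _
    -- decompose the integral
    have hI : ∫ y in Ioi (0:ℝ), g y = (∫ y in S 0, g y) + ∑' n : ℕ, ∫ y in S (n+1), g y := by
      rw [← H.tsum_eq]
      exact Summable.tsum_eq_zero_add sumI
    have hsplit : k * (∑' x : ℕ, g (k * ((x:ℝ) + 1))) - ∫ y in Ioi (0:ℝ), g y =
        (∑' n : ℕ, (k * g (k * ((n:ℝ)+1)) - ∫ y in S (n+1), g y)) - ∫ y in S 0, g y := by
      rw [hI, Summable.tsum_sub sumg sumI', tsum_mul_left]
      ring
    -- bound the tsum of differences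
    have hts : |∑' n : ℕ, (k * g (k * ((n:ℝ)+1)) - ∫ y in S (n+1), g y)| ≤
        M * k ^ (3-θ) * Z := by
      have hb := tsum_of_norm_bounded (hZsum.hasSum.mul_left (M * k ^ (3-θ)))
        (fun n => by rw [Real.norm_eq_abs]; exact perterm n)
      rwa [Real.norm_eq_abs] at hb
    -- bound the first piece
    have hS0 : S 0 = Ioc (0:ℝ) k := by
      rw [hS]
      norm_num
    have hI0 : |∫ y in S 0, g y| ≤ M * (k ^ (3-θ) / (3-θ)) := by
      rw [hS0]
      have hIoc : IntegrableOn g (Ioc 0 k) := hint.mono_set (fun y hy => hy.1)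
      have hbint : IntegrableOn (fun y : ℝ => M * y ^ (2-θ)) (Ioc 0 k) := by
        rw [← intervalIntegrable_iff_integrableOn_Ioc_of_le hk.le]
        exact (intervalIntegral.intervalIntegrable_rpow' (by linarith)).const_mul M
      have h1 : |∫ y in Ioc (0:ℝ) k, g y| ≤ ∫ y in Ioc (0:ℝ) k, |g y| := by
        simpa [Real.norm_eq_abs] using
          norm_integral_le_integral_norm (μ := volume.restrict (Ioc (0:ℝ) k)) g
      have h2 : ∫ y in Ioc (0:ℝ) k, |g y| ≤ ∫ y in Ioc (0:ℝ) k, M * y ^ (2-θ) := by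
        apply setIntegral_mono_on hIoc.abs hbint measurableSet_Ioc
        exact fun y hy => hg0 y hy.1
      have h3 : ∫ y in Ioc (0:ℝ) k, M * y ^ (2-θ) = M * (k ^ (3-θ) / (3-θ)) := by
        rw [← intervalIntegral.integral_of_le hk.le, intervalIntegral.integral_const_mul,
          integral_rpow (Or.inl (by linarith)),
          Real.zero_rpow (by linarith : (2:ℝ)-θ+1 ≠ 0), show (2:ℝ)-θ+1 = 3-θ by ring]
        ring
      linarith
    calc |k * (∑' x : ℕ, g (k * ((x:ℝ) + 1))) - ∫ y in Ioi (0:ℝ), g y|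
        = |(∑' n : ℕ, (k * g (k * ((n:ℝ)+1)) - ∫ y in S (n+1), g y)) - ∫ y in S 0, g y| := by
          rw [hsplit]
      _ ≤ |∑' n : ℕ, (k * g (k * ((n:ℝ)+1)) - ∫ y in S (n+1), g y)| + |∫ y in S 0, g y| := by
          rw [sub_eq_add_neg]
          exact (abs_add_le _ _).trans (by rw [abs_neg])
      _ ≤ M * k ^ (3-θ) * Z + M * (k ^ (3-θ) / (3-θ)) := add_le_add hts hI0
      _ = A * k ^ (3-θ) := by rw [hAdef]; ring
  -- squeeze
  have htend0 : Tendsto (fun k : ℝ => A * k ^ (3-θ)) (nhdsWithin 0 (Ioi 0)) (nhds 0) := by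
    have hcont : ContinuousAt (fun x : ℝ => x ^ (3-θ)) 0 :=
      Real.continuousAt_rpow_const 0 (3-θ) (Or.inr h3θ.le)
    have h := (hcont.tendsto).mono_left (nhdsWithin_le_nhds (s := Ioi (0:ℝ)))
    rw [Real.zero_rpow h3θ.ne'] at h
    simpa using h.const_mul A
  rw [tendsto_iff_norm_sub_tendsto_zero]
  apply squeeze_zero' (Filter.Eventually.of_forall (fun x => norm_nonneg _))
    ?_ htend0
  filter_upwards [self_mem_nhdsWithin] with k hk
  rw [Real.norm_eq_abs]
  exact key k hk


lemma integrableOn_aux {q r C : ℝ} (hq : -1 < q) (hr : r < -1) {F : ℝ → ℝ}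
    (hcont : ContinuousOn F (Set.Ioi 0))
    (h1 : ∀ y : ℝ, 0 < y → y ≤ 1 → |F y| ≤ C * y ^ q)
    (h2 : ∀ y : ℝ, 1 ≤ y → |F y| ≤ C * y ^ r) :
    IntegrableOn F (Set.Ioi 0) := by
  have hIoc : IntegrableOn F (Ioc 0 1) := by
    have hbint : IntegrableOn (fun y : ℝ => C * y ^ q) (Ioc 0 1) := by
      rw [← intervalIntegrable_iff_integrableOn_Ioc_of_le zero_le_one]
      exact (intervalIntegral.intervalIntegrable_rpow' hq).const_mul C
    apply Integrable.mono' hbint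
    · exact (hcont.mono (fun y hy => hy.1)).aestronglyMeasurable measurableSet_Ioc
    · rw [ae_restrict_iff' measurableSet_Ioc]
      exact Filter.Eventually.of_forall (fun y hy => h1 y hy.1 hy.2)
  have hIoi : IntegrableOn F (Ioi 1) := by
    have hbint : IntegrableOn (fun y : ℝ => C * y ^ r) (Ioi 1) :=
      (integrableOn_Ioi_rpow_of_lt hr one_pos).const_mul C
    apply Integrable.mono' hbint
    · exact (hcont.mono (fun y (hy : y ∈ Ioi (1:ℝ)) => mem_Ioi.mpr (lt_trans one_pos hy))).aestronglyMeasurable measurableSet_Ioi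
    · rw [ae_restrict_iff' measurableSet_Ioi]
      exact Filter.Eventually.of_forall (fun y hy => h2 y hy.le)
  have : Ioi (0:ℝ) = Ioc 0 1 ∪ Ioi 1 := (Set.Ioc_union_Ioi_eq_Ioi zero_le_one).symm
  rw [this]
  exact hIoc.union hIoi

lemma abs_sin_le_of_nonneg {x : ℝ} (hx : 0 ≤ x) : |sin x| ≤ x := by
  have := Real.abs_sin_le_abs (x := x)
  rwa [abs_of_nonneg hx] at this

lemma cont_h {θ : ℝ} : ContinuousOn (fun y : ℝ => sin (π * y) ^ 2 / y ^ θ) (Set.Ioi 0) := by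
  apply ContinuousOn.div
  · exact (Continuous.continuousOn (by continuity))
  · intro y hy
    exact (Real.continuousAt_rpow_const y θ (Or.inl (ne_of_gt hy))).continuousWithinAt
  · intro y hy
    exact (Real.rpow_pos_of_pos hy θ).ne'

lemma integrable_h {θ : ℝ} (hθ1 : 2 < θ) (hθ2 : θ < 3) :
    IntegrableOn (fun y : ℝ => sin (π * y) ^ 2 / y ^ θ) (Set.Ioi 0) := by
  apply integrableOn_aux (q := 2 - θ) (r := -θ) (C := π ^ 2) (by linarith) (by linarith) cont_h
  · intro y hy0 hy1
    have hyθ : (0:ℝ) < y ^ θ := Real.rpow_pos_of_pos hy0 θ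
    rw [abs_div, abs_of_pos hyθ, abs_of_nonneg (sq_nonneg _)]
    have hs : sin (π * y) ^ 2 ≤ (π * y) ^ 2 := by
      have := abs_sin_le_of_nonneg (x := π * y) (by positivity)
      nlinarith [abs_nonneg (sin (π*y)), neg_abs_le (sin (π*y)), le_abs_self (sin (π*y))]
    rw [div_le_iff₀ hyθ]
    calc sin (π * y) ^ 2 ≤ (π * y) ^ 2 := hs
      _ = π ^ 2 * y ^ (2:ℝ) := by rw [Real.rpow_two]; ring
      _ = π ^ 2 * y ^ (2 - θ) * y ^ θ := by
          rw [mul_assoc, ← Real.rpow_add hy0]; ring_nf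
  · intro y hy1
    have hy0 : (0:ℝ) < y := lt_of_lt_of_le one_pos hy1
    have hyθ : (0:ℝ) < y ^ θ := Real.rpow_pos_of_pos hy0 θ
    rw [abs_div, abs_of_pos hyθ, abs_of_nonneg (sq_nonneg _)]
    rw [div_le_iff₀ hyθ]
    have : π ^ 2 * y ^ (-θ) * y ^ θ = π ^ 2 := by
      rw [mul_assoc, ← Real.rpow_add hy0]
      simp
    rw [this]
    nlinarith [sin_le_one (π * y), neg_one_le_sin (π * y), sq_nonneg (sin (π*y)), Real.pi_gt_three]

lemma cont_g2 {θ : ℝ} : ContinuousOn (fun y : ℝ => sin (2 * π * y) / y ^ (θ - 1)) (Set.Ioi 0) := by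
  apply ContinuousOn.div
  · exact (Continuous.continuousOn (by continuity))
  · intro y hy
    exact (Real.continuousAt_rpow_const y (θ-1) (Or.inl (ne_of_gt hy))).continuousWithinAt
  · intro y hy
    exact (Real.rpow_pos_of_pos hy (θ-1)).ne'

lemma integrable_g2 {θ : ℝ} (hθ1 : 2 < θ) (hθ2 : θ < 3) :
    IntegrableOn (fun y : ℝ => sin (2 * π * y) / y ^ (θ - 1)) (Set.Ioi 0) := by
  apply integrableOn_aux (q := 2 - θ) (r := 1 - θ) (C := 2 * π) (by linarith) (by linarith) cont_g2
  · intro y hy0 hy1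
    have hyθ : (0:ℝ) < y ^ (θ-1) := Real.rpow_pos_of_pos hy0 _
    rw [abs_div, abs_of_pos hyθ, div_le_iff₀ hyθ]
    calc |sin (2 * π * y)| ≤ 2 * π * y := abs_sin_le_of_nonneg (by positivity)
      _ = 2 * π * y ^ (1:ℝ) := by rw [Real.rpow_one]
      _ = 2 * π * y ^ (2 - θ) * y ^ (θ - 1) := by
          rw [show 2 * π * y ^ (2-θ) * y ^ (θ-1) = 2 * π * (y ^ (2-θ) * y ^ (θ-1)) by ring,
            ← Real.rpow_add hy0]
          norm_num
  · intro y hy1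
    have hy0 : (0:ℝ) < y := lt_of_lt_of_le one_pos hy1
    have hyθ : (0:ℝ) < y ^ (θ-1) := Real.rpow_pos_of_pos hy0 _
    rw [abs_div, abs_of_pos hyθ, div_le_iff₀ hyθ]
    have : 2 * π * y ^ (1-θ) * y ^ (θ-1) = 2 * π := by
      rw [mul_assoc, ← Real.rpow_add hy0]
      simp
    rw [this]
    nlinarith [abs_sin_le_one (2*π*y), Real.pi_gt_three]

lemma abs_sub_le_abs_add_abs (a b : ℝ) : |a - b| ≤ |a| + |b| := by
  calc |a - b| = |a + -b| := by rw [sub_eq_add_neg]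
    _ ≤ |a| + |-b| := abs_add_le _ _
    _ = |a| + |b| := by rw [abs_neg]

lemma tendsto_ahat {θ : ℝ} (hθ1 : 2 < θ) (hθ2 : θ < 3) :
    Tendsto (fun k => k ^ (1 - θ) * ahat θ k) (nhdsWithin 0 (Set.Ioi 0))
      (nhds (4 * J θ)) := by
  set g : ℝ → ℝ := fun y => sin (π * y) ^ 2 / y ^ θ with hg
  set g' : ℝ → ℝ := fun y =>
    (π * sin (2 * π * y) * y ^ θ - sin (π * y) ^ 2 * (θ * y ^ (θ - 1))) / (y ^ θ) ^ 2 with hg'def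
  have hM : (0:ℝ) ≤ π ^ 2 * (2 + θ) := by positivity
  have hderiv : ∀ y : ℝ, 0 < y → HasDerivAt g (g' y) y := by
    intro y hy
    have h1 : HasDerivAt (fun y : ℝ => π * y) π y := by simpa using (hasDerivAt_id y).const_mul π
    have h2 : HasDerivAt (fun y : ℝ => sin (π * y) ^ 2)
        ((2:ℕ) * sin (π * y) ^ 1 * (cos (π * y) * π)) y := h1.sin.pow 2
    have h3 : HasDerivAt (fun y : ℝ => y ^ θ) (θ * y ^ (θ - 1)) y :=
      Real.hasDerivAt_rpow_const (Or.inl hy.ne')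
    have h4 := h2.div h3 (Real.rpow_pos_of_pos hy θ).ne'
    refine h4.congr_deriv ?_
    simp only [hg'def]
    rw [show 2 * π * y = 2 * (π * y) by ring, sin_two_mul]
    push_cast
    ring
  have hgb' : ∀ y : ℝ, 0 < y → |g' y| ≤ π ^ 2 * (2 + θ) * y ^ (1 - θ) := by
    intro y hy
    have hyθ : (0:ℝ) < y ^ θ := Real.rpow_pos_of_pos hy θ
    have hD : (0:ℝ) < (y ^ θ) ^ 2 := by positivity
    have hsin1 : |sin (2 * π * y)| ≤ 2 * π * y := abs_sin_le_of_nonneg (by positivity)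
    have habs : |sin (π * y)| ≤ π * y := abs_sin_le_of_nonneg (by positivity)
    have hsin2 : sin (π * y) ^ 2 ≤ (π * y) ^ 2 := by
      rw [← sq_abs]
      exact pow_le_pow_left₀ (abs_nonneg _) habs 2
    have e1 : y * y ^ θ = y ^ (θ + 1) := by
      rw [Real.rpow_add hy, Real.rpow_one]; ring
    have e2 : y ^ (2:ℕ) * y ^ (θ - 1) = y ^ (θ + 1) := by
      rw [← Real.rpow_natCast y 2, ← Real.rpow_add hy]
      congr 1
      push_cast
      ring
    have b1 : |π * sin (2 * π * y) * y ^ θ| ≤ π * (2 * π * y) * y ^ θ := by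
      rw [abs_mul, abs_mul, abs_of_pos pi_pos, abs_of_pos hyθ]
      exact mul_le_mul_of_nonneg_right (mul_le_mul_of_nonneg_left hsin1 pi_pos.le) hyθ.le
    have b2 : |sin (π * y) ^ 2 * (θ * y ^ (θ - 1))| ≤ (π * y) ^ 2 * (θ * y ^ (θ - 1)) := by
      have hpos : (0:ℝ) < θ * y ^ (θ - 1) := by
        have := Real.rpow_pos_of_pos hy (θ - 1)
        nlinarith
      rw [abs_mul, abs_of_nonneg (sq_nonneg _), abs_of_pos hpos]
      exact mul_le_mul_of_nonneg_right hsin2 hpos.le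
    have hnum : |π * sin (2 * π * y) * y ^ θ - sin (π * y) ^ 2 * (θ * y ^ (θ - 1))| ≤
        π ^ 2 * (2 + θ) * y ^ (θ + 1) := by
      refine (abs_sub_le_abs_add_abs _ _).trans ?_
      refine (add_le_add b1 b2).trans_eq ?_
      linear_combination (2 * π ^ 2) * e1 + (π ^ 2 * θ) * e2
    rw [hg'def, abs_div, abs_of_pos hD, div_le_iff₀ hD]
    refine hnum.trans_eq ?_
    have e3 : y ^ (1 - θ) * (y ^ θ * y ^ θ) = y ^ (θ + 1) := by
      rw [← Real.rpow_add hy, ← Real.rpow_add hy]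
      congr 1
      ring
    rw [pow_two (y ^ θ)]
    linear_combination (-(π ^ 2 * (2 + θ))) * e3
  have hgb0 : ∀ y : ℝ, 0 < y → |g y| ≤ π ^ 2 * (2 + θ) * y ^ (2 - θ) := by
    intro y hy
    have hyθ : (0:ℝ) < y ^ θ := Real.rpow_pos_of_pos hy θ
    have habs : |sin (π * y)| ≤ π * y := abs_sin_le_of_nonneg (by positivity)
    have hsin2 : sin (π * y) ^ 2 ≤ (π * y) ^ 2 := by
      rw [← sq_abs]
      exact pow_le_pow_left₀ (abs_nonneg _) habs 2
    rw [hg, abs_div, abs_of_pos hyθ, abs_of_nonneg (sq_nonneg _), div_le_iff₀ hyθ]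
    have e : y ^ (2 - θ) * y ^ θ = y ^ (2:ℕ) := by
      rw [← Real.rpow_add hy, ← Real.rpow_natCast y 2]
      congr 1
      push_cast
      ring
    calc sin (π * y) ^ 2 ≤ (π * y) ^ 2 := hsin2
      _ ≤ π ^ 2 * (2 + θ) * (y ^ (2 - θ) * y ^ θ) := by
          rw [e]
          nlinarith [sq_nonneg y, Real.pi_pos]
      _ = π ^ 2 * (2 + θ) * y ^ (2 - θ) * y ^ θ := by ring
  have hsum : ∀ k : ℝ, 0 < k → Summable (fun x : ℕ => g (k * ((x:ℝ) + 1))) := by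
    intro k hk
    apply Summable.of_nonneg_of_le (fun n => by rw [hg]; positivity) (fun n => ?_)
      ((summable_aux (by linarith : -θ < -1)).mul_left (k ^ (-θ)))
    rw [hg]
    have hc : (0:ℝ) < (n:ℝ) + 1 := by positivity
    have hkc : (0:ℝ) < k * ((n:ℝ) + 1) := by positivity
    rw [div_le_iff₀ (Real.rpow_pos_of_pos hkc θ)]
    have e : k ^ (-θ) * ((n:ℝ)+1) ^ (-θ) * (k * ((n:ℝ)+1)) ^ θ = 1 := by
      rw [← Real.mul_rpow hk.le hc.le, ← Real.rpow_add hkc]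
      simp
    calc sin (π * (k * ((n:ℝ)+1))) ^ 2 ≤ 1 := by
          nlinarith [sin_le_one (π * (k * ((n:ℝ)+1))), neg_one_le_sin (π * (k * ((n:ℝ)+1)))]
      _ = k ^ (-θ) * ((n:ℝ)+1) ^ (-θ) * (k * ((n:ℝ)+1)) ^ θ := e.symm
  have hR := riemann hθ1 hθ2 hM hderiv hgb' hgb0 (integrable_h hθ1 hθ2) hsum
  have h4 := hR.const_mul (4:ℝ)
  apply h4.congr'
  filter_upwards [self_mem_nhdsWithin] with k hk
  have hkpos : (0:ℝ) < k := hk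
  have hterm : ∀ x : ℕ, g (k * ((x:ℝ)+1)) =
      k ^ (-θ) * (sin (π * k * ((x:ℝ)+1)) ^ 2 / ((x:ℝ)+1) ^ θ) := by
    intro x
    simp only [hg]
    have hc : (0:ℝ) < (x:ℝ) + 1 := by positivity
    rw [show π * (k * ((x:ℝ)+1)) = π * k * ((x:ℝ)+1) by ring,
      Real.mul_rpow hkpos.le hc.le, Real.rpow_neg hkpos.le]
    field_simp
  rw [tsum_congr hterm, tsum_mul_left]
  unfold ahat
  have e : k * k ^ (-θ) = k ^ (1 - θ) := by
    rw [show (1:ℝ) - θ = 1 + -θ by ring, Real.rpow_add hkpos, Real.rpow_one]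
  rw [← e]
  ring

lemma tendsto_rpow_zero {p : ℝ} (hp : 0 < p) :
    Tendsto (fun x : ℝ => x ^ p) (nhdsWithin 0 (Set.Ioi 0)) (nhds 0) := by
  have hcont : ContinuousAt (fun x : ℝ => x ^ p) 0 :=
    Real.continuousAt_rpow_const 0 p (Or.inr hp.le)
  have h := (hcont.tendsto).mono_left (nhdsWithin_le_nhds (s := Set.Ioi (0:ℝ)))
  rwa [Real.zero_rpow hp.ne'] at h

lemma integral_g2_eq {θ : ℝ} (hθ1 : 2 < θ) (hθ2 : θ < 3) :
    ∫ y in Set.Ioi (0:ℝ), sin (2 * π * y) / y ^ (θ - 1) = (θ - 1) / π * J θ := by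
  set u : ℝ → ℝ := fun y => sin (π * y) ^ 2 with hu_def
  set u' : ℝ → ℝ := fun y => π * sin (2 * π * y) with hu'_def
  set v : ℝ → ℝ := fun y => y ^ (1 - θ) with hv_def
  set v' : ℝ → ℝ := fun y => (1 - θ) * y ^ (-θ) with hv'_def
  have hu : ∀ y ∈ Set.Ioi (0:ℝ), HasDerivAt u (u' y) y := by
    intro y _
    have h1 : HasDerivAt (fun y : ℝ => π * y) π y := by simpa using (hasDerivAt_id y).const_mul π
    have h2 : HasDerivAt (fun y : ℝ => sin (π * y) ^ 2)
        ((2:ℕ) * sin (π * y) ^ 1 * (cos (π * y) * π)) y := h1.sin.pow 2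
    convert h2 using 1
    simp only [hu'_def]
    rw [show 2 * π * y = 2 * (π * y) by ring, sin_two_mul]
    push_cast
    ring
  have hv : ∀ y ∈ Set.Ioi (0:ℝ), HasDerivAt v (v' y) y := by
    intro y hy
    have := Real.hasDerivAt_rpow_const (p := 1 - θ) (Or.inl (ne_of_gt hy))
    convert this using 1
    simp only [hv'_def]
    congr 1
    ring
  have huv' : IntegrableOn (u * v') (Set.Ioi (0:ℝ)) := by
    have hbase : IntegrableOn (fun x : ℝ => (1 - θ) * (sin (π * x) ^ 2 / x ^ θ)) (Set.Ioi 0) :=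
      (integrable_h hθ1 hθ2).const_mul (1 - θ)
    apply hbase.congr_fun ?_ measurableSet_Ioi
    intro y hy
    simp only [Pi.mul_apply, hu_def, hv'_def]
    rw [Real.rpow_neg (le_of_lt hy)]
    field_simp
  have hu'v : IntegrableOn (u' * v) (Set.Ioi (0:ℝ)) := by
    have hbase : IntegrableOn (fun x : ℝ => π * (sin (2 * π * x) / x ^ (θ - 1))) (Set.Ioi 0) :=
      (integrable_g2 hθ1 hθ2).const_mul π
    apply hbase.congr_fun ?_ measurableSet_Ioi
    intro y hy
    simp only [Pi.mul_apply, hu'_def, hv_def]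
    rw [show (1:ℝ) - θ = -(θ-1) by ring, Real.rpow_neg (le_of_lt hy)]
    field_simp
  have h_zero : Tendsto (u * v) (nhdsWithin 0 (Set.Ioi 0)) (nhds 0) := by
    apply squeeze_zero_norm' ?_
      (show Tendsto (fun y : ℝ => π ^ 2 * y ^ (3-θ)) (nhdsWithin 0 (Set.Ioi 0)) (nhds 0) by
        simpa using (tendsto_rpow_zero (p := 3 - θ) (by linarith)).const_mul (π^2))
    filter_upwards [self_mem_nhdsWithin] with y hy
    have hy0 : (0:ℝ) < y := hy
    simp only [Pi.mul_apply, hu_def, hv_def, Real.norm_eq_abs]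
    have h1θ : (0:ℝ) < y ^ (1-θ) := Real.rpow_pos_of_pos hy0 _
    rw [abs_mul, abs_of_nonneg (sq_nonneg _), abs_of_pos h1θ]
    have habs : |sin (π * y)| ≤ π * y := abs_sin_le_of_nonneg (by positivity)
    have hsin2 : sin (π * y) ^ 2 ≤ (π * y) ^ 2 := by
      rw [← sq_abs]; exact pow_le_pow_left₀ (abs_nonneg _) habs 2
    have e : y ^ (2:ℕ) * y ^ (1-θ) = y ^ (3-θ) := by
      rw [← Real.rpow_natCast y 2, ← Real.rpow_add hy0]
      congr 1
      push_cast
      ring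
    calc sin (π * y) ^ 2 * y ^ (1-θ) ≤ (π * y) ^ 2 * y ^ (1-θ) := by
          exact mul_le_mul_of_nonneg_right hsin2 h1θ.le
      _ = π ^ 2 * (y ^ (2:ℕ) * y ^ (1-θ)) := by ring
      _ = π ^ 2 * y ^ (3-θ) := by rw [e]
  have h_infty : Tendsto (u * v) atTop (nhds 0) := by
    apply squeeze_zero_norm' ?_ (tendsto_rpow_neg_atTop (by linarith : (0:ℝ) < θ - 1))
    filter_upwards [eventually_ge_atTop (1:ℝ)] with y hy
    have hy0 : (0:ℝ) < y := lt_of_lt_of_le one_pos hy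
    simp only [Pi.mul_apply, hu_def, hv_def, Real.norm_eq_abs]
    have h1θ : (0:ℝ) < y ^ (1-θ) := Real.rpow_pos_of_pos hy0 _
    rw [abs_mul, abs_of_nonneg (sq_nonneg _), abs_of_pos h1θ]
    rw [show -(θ-1) = 1-θ by ring]
    nlinarith [mul_nonneg (by nlinarith [sin_le_one (π * y), neg_one_le_sin (π * y)] :
      (0:ℝ) ≤ 1 - sin (π * y) ^ 2) h1θ.le]
  have hibp := MeasureTheory.integral_Ioi_mul_deriv_eq_deriv_mul hu hv huv' hu'v h_zero h_infty
  -- rewrite both integrals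
  have e1 : ∫ y in Set.Ioi (0:ℝ), u y * v' y = (1 - θ) * J θ := by
    rw [J, ← MeasureTheory.integral_const_mul]
    apply MeasureTheory.setIntegral_congr_fun measurableSet_Ioi
    intro y hy
    simp only [hu_def, hv'_def]
    rw [Real.rpow_neg (le_of_lt hy)]
    field_simp
  have e2 : ∫ y in Set.Ioi (0:ℝ), u' y * v y = π * ∫ y in Set.Ioi (0:ℝ), sin (2*π*y) / y ^ (θ-1) := by
    rw [← MeasureTheory.integral_const_mul]
    apply MeasureTheory.setIntegral_congr_fun measurableSet_Ioi
    intro y hy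
    simp only [hu'_def, hv_def]
    rw [show (1:ℝ) - θ = -(θ-1) by ring, Real.rpow_neg (le_of_lt hy)]
    field_simp
  rw [e1, e2] at hibp
  have hπ : π ≠ 0 := pi_ne_zero
  rw [div_mul_eq_mul_div, eq_div_iff hπ]
  linarith [hibp]

lemma tendsto_ahatD {θ : ℝ} (hθ1 : 2 < θ) (hθ2 : θ < 3) :
    Tendsto (fun k => k ^ (2 - θ) * ahatD θ k) (nhdsWithin 0 (Set.Ioi 0))
      (nhds (4 * (θ - 1) * J θ)) := by
  set g : ℝ → ℝ := fun y => sin (2 * π * y) / y ^ (θ - 1) with hg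
  set g' : ℝ → ℝ := fun y =>
    ((cos (2 * π * y) * (2 * π)) * y ^ (θ-1) - sin (2 * π * y) * ((θ-1) * y ^ (θ-1-1)))
      / (y ^ (θ-1)) ^ 2 with hg'def
  have hM : (0:ℝ) ≤ 2 * π * θ := by positivity
  have hderiv : ∀ y : ℝ, 0 < y → HasDerivAt g (g' y) y := by
    intro y hy
    have h1 : HasDerivAt (fun y : ℝ => sin (2 * π * y)) (cos (2 * π * y) * (2 * π)) y := by
      have : HasDerivAt (fun y : ℝ => 2 * π * y) (2 * π) y := by
        simpa using (hasDerivAt_id y).const_mul (2 * π)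
      exact this.sin
    have h3 : HasDerivAt (fun y : ℝ => y ^ (θ-1)) ((θ-1) * y ^ (θ-1-1)) y :=
      Real.hasDerivAt_rpow_const (Or.inl hy.ne')
    exact h1.div h3 (Real.rpow_pos_of_pos hy _).ne'
  have hgb' : ∀ y : ℝ, 0 < y → |g' y| ≤ 2 * π * θ * y ^ (1 - θ) := by
    intro y hy
    have hyθ : (0:ℝ) < y ^ (θ-1) := Real.rpow_pos_of_pos hy _
    have hD : (0:ℝ) < (y ^ (θ-1)) ^ 2 := by positivity
    have hsin1 : |sin (2 * π * y)| ≤ 2 * π * y := abs_sin_le_of_nonneg (by positivity)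
    have e1 : y * y ^ (θ-1-1) = y ^ (θ-1) := by
      rw [show θ-1 = (θ-1-1) + 1 by ring, Real.rpow_add hy, Real.rpow_one]
      ring_nf
    have b1 : |(cos (2 * π * y) * (2 * π)) * y ^ (θ-1)| ≤ 2 * π * y ^ (θ-1) := by
      rw [abs_mul, abs_of_pos hyθ, abs_mul, abs_of_pos (by positivity : (0:ℝ) < 2*π)]
      have h1 := abs_cos_le_one (2 * π * y)
      calc |cos (2*π*y)| * (2*π) * y ^ (θ-1) ≤ 1 * (2*π) * y ^ (θ-1) := by
            exact mul_le_mul_of_nonneg_right (mul_le_mul_of_nonneg_right h1 (by positivity)) hyθ.le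
        _ = 2 * π * y ^ (θ-1) := by ring
    have b2 : |sin (2 * π * y) * ((θ-1) * y ^ (θ-1-1))| ≤ 2 * π * (θ-1) * y ^ (θ-1) := by
      have hpos : (0:ℝ) < (θ-1) * y ^ (θ-1-1) := by
        have := Real.rpow_pos_of_pos hy (θ-1-1)
        nlinarith
      rw [abs_mul, abs_of_pos hpos]
      calc |sin (2*π*y)| * ((θ-1) * y ^ (θ-1-1)) ≤ (2*π*y) * ((θ-1) * y ^ (θ-1-1)) :=
            mul_le_mul_of_nonneg_right hsin1 hpos.le
        _ = 2 * π * (θ-1) * (y * y ^ (θ-1-1)) := by ring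
        _ = 2 * π * (θ-1) * y ^ (θ-1) := by rw [e1]
    have hnum : |(cos (2 * π * y) * (2 * π)) * y ^ (θ-1) - sin (2 * π * y) * ((θ-1) * y ^ (θ-1-1))|
        ≤ 2 * π * θ * y ^ (θ-1) := by
      refine (abs_sub_le_abs_add_abs _ _).trans ?_
      refine (add_le_add b1 b2).trans_eq ?_
      ring
    rw [hg'def]
    simp only []
    rw [abs_div, abs_of_pos hD, div_le_iff₀ hD]
    refine hnum.trans_eq ?_
    have e3 : y ^ (1-θ) * (y ^ (θ-1) * y ^ (θ-1)) = y ^ (θ-1) := by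
      rw [← Real.rpow_add hy, ← Real.rpow_add hy]
      congr 1
      ring
    rw [pow_two (y ^ (θ-1))]
    linear_combination (-(2 * π * θ)) * e3
  have hgb0 : ∀ y : ℝ, 0 < y → |g y| ≤ 2 * π * θ * y ^ (2 - θ) := by
    intro y hy
    have hyθ : (0:ℝ) < y ^ (θ-1) := Real.rpow_pos_of_pos hy _
    have hsin1 : |sin (2 * π * y)| ≤ 2 * π * y := abs_sin_le_of_nonneg (by positivity)
    rw [hg]
    simp only []
    rw [abs_div, abs_of_pos hyθ, div_le_iff₀ hyθ]
    have e : y ^ (2-θ) * y ^ (θ-1) = y := by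
      rw [← Real.rpow_add hy, show (2-θ) + (θ-1) = 1 by ring, Real.rpow_one]
    calc |sin (2*π*y)| ≤ 2 * π * y := hsin1
      _ ≤ 2 * π * θ * y := by nlinarith [mul_pos pi_pos hy, pi_pos]
      _ = 2 * π * θ * (y ^ (2-θ) * y ^ (θ-1)) := by rw [e]
      _ = 2 * π * θ * y ^ (2-θ) * y ^ (θ-1) := by ring
  have hsum : ∀ k : ℝ, 0 < k → Summable (fun x : ℕ => g (k * ((x:ℝ) + 1))) := by
    intro k hk
    apply Summable.of_norm_bounded ((summable_aux (by linarith : 1-θ < -1)).mul_left (k ^ (1-θ)))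
    intro n
    have hc : (0:ℝ) < (n:ℝ) + 1 := by positivity
    have hkc : (0:ℝ) < k * ((n:ℝ) + 1) := by positivity
    have hkcθ : (0:ℝ) < (k * ((n:ℝ)+1)) ^ (θ-1) := Real.rpow_pos_of_pos hkc _
    rw [hg]
    simp only [Real.norm_eq_abs]
    rw [abs_div, abs_of_pos hkcθ, div_le_iff₀ hkcθ]
    have e : k ^ (1-θ) * ((n:ℝ)+1) ^ (1-θ) * (k * ((n:ℝ)+1)) ^ (θ-1) = 1 := by
      rw [← Real.mul_rpow hk.le hc.le, ← Real.rpow_add hkc]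
      simp
    calc |sin (2 * π * (k * ((n:ℝ)+1)))| ≤ 1 := abs_sin_le_one _
      _ = k ^ (1-θ) * ((n:ℝ)+1) ^ (1-θ) * (k * ((n:ℝ)+1)) ^ (θ-1) := e.symm
  have hR := riemann hθ1 hθ2 hM hderiv hgb' hgb0 (integrable_g2 hθ1 hθ2) hsum
  rw [integral_g2_eq hθ1 hθ2] at hR
  have h4 := hR.const_mul (4 * π)
  have hval : (4 * π) * ((θ-1)/π * J θ) = 4 * (θ-1) * J θ := by
    field_simp
  rw [hval] at h4
  apply h4.congr'
  filter_upwards [self_mem_nhdsWithin] with k hk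
  have hkpos : (0:ℝ) < k := hk
  have hterm : ∀ x : ℕ, g (k * ((x:ℝ)+1)) =
      k ^ (1-θ) * (sin (2 * π * k * ((x:ℝ)+1)) / ((x:ℝ)+1) ^ (θ-1)) := by
    intro x
    simp only [hg]
    have hc : (0:ℝ) < (x:ℝ) + 1 := by positivity
    rw [show 2 * π * (k * ((x:ℝ)+1)) = 2 * π * k * ((x:ℝ)+1) by ring,
      Real.mul_rpow hkpos.le hc.le, show (1:ℝ) - θ = -(θ-1) by ring,
      Real.rpow_neg hkpos.le]
    field_simp
  rw [tsum_congr hterm, tsum_mul_left]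
  unfold ahatD
  have e : k * k ^ (1-θ) = k ^ (2-θ) := by
    rw [show (2:ℝ) - θ = 1 + (1-θ) by ring, Real.rpow_add hkpos, Real.rpow_one]
  rw [← e]
  ring

lemma Cθ_eq {θ : ℝ} (hθ1 : 2 < θ) (hθ2 : θ < 3) : Cθ θ = 4 * J θ := by
  have hcomp := MeasureTheory.integral_comp_mul_left_Ioi
    (fun u => sin u ^ 2 / u ^ θ) 0 pi_pos
  rw [mul_zero] at hcomp
  have e1 : ∫ y in Set.Ioi (0:ℝ), sin (π * y) ^ 2 / (π * y) ^ θ = π ^ (-θ) * J θ := by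
    rw [J, ← MeasureTheory.integral_const_mul]
    apply MeasureTheory.setIntegral_congr_fun measurableSet_Ioi
    intro y hy
    beta_reduce
    rw [Real.mul_rpow pi_pos.le (le_of_lt hy), Real.rpow_neg pi_pos.le]
    have h1 : (0:ℝ) < π ^ θ := Real.rpow_pos_of_pos pi_pos θ
    have h2 : (0:ℝ) < y ^ θ := Real.rpow_pos_of_pos hy θ
    field_simp
  rw [e1] at hcomp
  have hI : ∫ u in Set.Ioi (0:ℝ), sin u ^ 2 / u ^ θ = π * (π ^ (-θ) * J θ) := by
    beta_reduce at hcomp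
    rw [hcomp, smul_eq_mul]
    field_simp
  rw [Cθ, hI]
  have e2 : π ^ (θ-1) * (π * π ^ (-θ)) = 1 := by
    rw [show (π : ℝ) * π ^ (-θ) = π ^ (1:ℝ) * π ^ (-θ) by rw [Real.rpow_one],
      ← Real.rpow_add pi_pos, ← Real.rpow_add pi_pos,
      show θ - 1 + (1 + -θ) = 0 by ring, Real.rpow_zero]
  calc 4 * π ^ (θ-1) * (π * (π ^ (-θ) * J θ)) = 4 * (π ^ (θ-1) * (π * π ^ (-θ))) * J θ := by ring
    _ = 4 * J θ := by rw [e2]; ring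

lemma J_pos {θ : ℝ} (hθ1 : 2 < θ) (hθ2 : θ < 3) : 0 < J θ := by
  rw [J]
  rw [MeasureTheory.setIntegral_pos_iff_support_of_nonneg_ae]
  · -- measure of support
    apply lt_of_lt_of_le ?_ (measure_mono (?_ :
      Set.Ioo (0:ℝ) 1 ⊆ Function.support (fun y => sin (π * y) ^ 2 / y ^ θ) ∩ Set.Ioi 0))
    · simp [Real.volume_Ioo]
    · intro y hy
      refine ⟨?_, hy.1⟩
      have hsin : 0 < sin (π * y) := by
        apply sin_pos_of_pos_of_lt_pi (mul_pos pi_pos hy.1)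
        nlinarith [pi_pos, hy.2, hy.1]
      have hyθ : (0:ℝ) < y ^ θ := Real.rpow_pos_of_pos hy.1 θ
      rw [Function.mem_support]
      positivity
  · filter_upwards [MeasureTheory.ae_restrict_mem measurableSet_Ioi] with y hy
    have hyθ : (0:ℝ) < y ^ θ := Real.rpow_pos_of_pos hy θ
    positivity
  · exact integrable_h hθ1 hθ2

end Stmt9Aux

open Stmt9Aux MeasureTheory Filter Set in
theorem stmt9 (θ : ℝ) (hθ1 : 2 < θ) (hθ2 : θ < 3) :
    (∀ k ∈ Set.Ioo (0 : ℝ) (1 / 2),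
      HasDerivAt (disp θ) (ahatD θ k / (2 * Real.sqrt (ahat θ k))) k) ∧
    Filter.Tendsto (fun k : ℝ => k ^ ((3 - θ) / 2) * deriv (disp θ) k)
      (nhdsWithin 0 (Set.Ioi 0)) (nhds ((θ - 1) * Real.sqrt (Cθ θ) / 2)) := by
  have hJ := J_pos hθ1 hθ2
  have hderiv : ∀ k ∈ Set.Ioo (0 : ℝ) (1 / 2),
      HasDerivAt (disp θ) (ahatD θ k / (2 * Real.sqrt (ahat θ k))) k := by
    intro k hk
    exact ((hasDerivAt_ahat hθ1 k).sqrt (ahat_pos hθ1 hk).ne')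
  refine ⟨hderiv, ?_⟩
  -- the auxiliary expression
  have key : Tendsto (fun k : ℝ => (k ^ (2 - θ) * ahatD θ k) /
      (2 * Real.sqrt (k ^ (1 - θ) * ahat θ k))) (nhdsWithin 0 (Set.Ioi 0))
      (nhds ((4 * (θ - 1) * J θ) / (2 * Real.sqrt (4 * J θ)))) := by
    apply Tendsto.div (tendsto_ahatD hθ1 hθ2)
    · exact (Real.continuous_sqrt.tendsto _).comp (tendsto_ahat hθ1 hθ2) |>.const_mul 2
    · positivity
  have hval : (4 * (θ - 1) * J θ) / (2 * Real.sqrt (4 * J θ)) =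
      (θ - 1) * Real.sqrt (Cθ θ) / 2 := by
    rw [Cθ_eq hθ1 hθ2]
    rw [show (4 : ℝ) * J θ = 2 ^ 2 * J θ by norm_num, Real.sqrt_mul (by positivity),
      Real.sqrt_sq (by norm_num : (0:ℝ) ≤ 2)]
    rw [eq_div_iff (by norm_num), div_mul_eq_mul_div, div_eq_iff (by positivity)]
    have : Real.sqrt (J θ) * Real.sqrt (J θ) = J θ := Real.mul_self_sqrt hJ.le
    nlinarith [this]
  rw [← hval]
  apply key.congr'
  filter_upwards [eventually_nhdsWithin_of_eventually_nhds
      (Filter.Tendsto.eventually_lt_const (by norm_num : (0:ℝ) < 1/2) Filter.tendsto_id),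
    self_mem_nhdsWithin] with k hk2 hk1
  -- hk1 : k ∈ Ioi 0, hk2 : k < 1/2
  have hk : k ∈ Set.Ioo (0:ℝ) (1/2) := ⟨hk1, hk2⟩
  have hd := (hderiv k hk).deriv
  rw [hd]
  have hkpos : (0:ℝ) < k := hk.1
  have hsq : Real.sqrt (k ^ (1 - θ) * ahat θ k) = k ^ ((1 - θ)/2) * Real.sqrt (ahat θ k) := by
    rw [Real.sqrt_mul (by positivity), Real.sqrt_eq_rpow, ← Real.rpow_mul hkpos.le]
    ring_nf
  rw [hsq]
  have hpow : k ^ (2 - θ) = k ^ ((3 - θ)/2) * k ^ ((1 - θ)/2) := by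
    rw [← Real.rpow_add hkpos]; congr 1; ring
  rw [hpow]
  have h1 : (0:ℝ) < k ^ ((1 - θ)/2) := Real.rpow_pos_of_pos hkpos _
  rcases eq_or_ne (Real.sqrt (ahat θ k)) 0 with h | h
  · simp [h]
  · field_simp
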